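/- Let n ≥ 4 and suppose a curvature tensor R on an n-dimensional inner product space T arises via the Gauss equation from α(X,Y) = Σᵢ⟨Xᵢ,Yᵢ⟩ηᵢ with k ≥ 3 pairwise distinct principal normals ηᵢ ∈ N and orthogonal decomposition T = E₁ ⊕ ⋯ ⊕ E_k. If R has vanishing Weyl tensor (pointwise conformal flatness condition), then at most one of the subspaces E_i has dimension larger than one. -/

import Mathlib

open RealInnerProductSpace Module

/-- If the Gauss-equation curvature tensor of α(X,Y) = Σᵢ⟨Xᵢ,Yᵢ⟩ηᵢ (k ≥ 3 pairwise distinct principal normals, n ≥ 4) has vanishing Weyl tensor, then at most one subspace E_i has dimension larger than one. -/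
theorem stmt9 {T N : Type*} [NormedAddCommGroup T] [InnerProductSpace ℝ T]
    [FiniteDimensional ℝ T] [NormedAddCommGroup N] [InnerProductSpace ℝ N]
    (hn : 4 ≤ finrank ℝ T)
    {k : ℕ} (hk : 3 ≤ k) (E : Fin k → Submodule ℝ T) (η : Fin k → N)
    (hne : ∀ i, E i ≠ ⊥)
    (hdist : Function.Injective η)
    (horth : ∀ i j, i ≠ j → ∀ X ∈ E i, ∀ Y ∈ E j, ⟪X, Y⟫ = 0)
    (hspan : (⨆ i, E i) = ⊤)
    (α : T → T → N)
    (hα : ∀ X Y : T, α X Y =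
      ∑ i, ⟪(((E i).orthogonalProjectionOnto X : E i) : T),
            (((E i).orthogonalProjectionOnto Y : E i) : T)⟫ • η i)
    -- the Gauss-equation curvature tensor
    (R : T → T → T → T → ℝ)
    (hR : ∀ X Y Z W : T, R X Y Z W = ⟪α X W, α Y Z⟫ - ⟪α X Z, α Y W⟫)
    -- the Ricci tensor, scalar curvature and Weyl tensor of R
    (Ric : T → T → ℝ)
    (hRic : ∀ X Y : T, Ric X Y =
      ∑ a, R (stdOrthonormalBasis ℝ T a) X Y (stdOrthonormalBasis ℝ T a))
    (scal : ℝ)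
    (hscal : scal = ∑ a, Ric (stdOrthonormalBasis ℝ T a) (stdOrthonormalBasis ℝ T a))
    (Weyl : T → T → T → T → ℝ)
    (hWeyl : ∀ X Y Z W : T, Weyl X Y Z W = R X Y Z W
      - (Ric X W * ⟪Y, Z⟫ - Ric X Z * ⟪Y, W⟫
          + Ric Y Z * ⟪X, W⟫ - Ric Y W * ⟪X, Z⟫) / ((finrank ℝ T : ℝ) - 2)
      + scal * (⟪X, W⟫ * ⟪Y, Z⟫ - ⟪X, Z⟫ * ⟪Y, W⟫)
          / (((finrank ℝ T : ℝ) - 1) * ((finrank ℝ T : ℝ) - 2)))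
    -- conformal flatness: the Weyl tensor vanishes
    (hW0 : ∀ X Y Z W : T, Weyl X Y Z W = 0) :
    ∀ i j, 1 < finrank ℝ (E i) → 1 < finrank ℝ (E j) → i = j := by
  intro i j hi hj
  by_contra hij
  classical
  -- projection facts
  have hproj0 : ∀ (a l : Fin k) (x : T), x ∈ E a → l ≠ a →
      (((E l).orthogonalProjectionOnto x : E l) : T) = 0 := by
    intro a l x hx hla
    have hxo : x ∈ (E l)ᗮ :=
      (Submodule.mem_orthogonal (E l) x).mpr (fun u hu => horth l a hla u hu x hx)
    rw [Submodule.orthogonalProjectionOnto_apply_of_mem_orthogonal hxo]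
    simp
  have hprojself : ∀ (a : Fin k) (x : T), x ∈ E a →
      (((E a).orthogonalProjectionOnto x : E a) : T) = x := fun a x hx =>
    Submodule.starProjection_eq_self_iff.mpr hx
  -- values of α
  have halpha : ∀ (a : Fin k) (x y : T), x ∈ E a → y ∈ E a →
      α x y = ⟪x, y⟫ • η a := by
    intro a x y hx hy
    rw [hα]
    rw [Finset.sum_eq_single a]
    · rw [hprojself a x hx, hprojself a y hy]
    · intro l _ hla
      rw [hproj0 a l x hx hla]
      simp
    · simp
  have halpha0 : ∀ (a b : Fin k) (x y : T), x ∈ E a → y ∈ E b → a ≠ b →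
      α x y = 0 := by
    intro a b x y hx hy hab
    rw [hα]
    apply Finset.sum_eq_zero
    intro l _
    by_cases hla : l = a
    · subst hla
      rw [hproj0 b l y hy hab]
      simp
    · rw [hproj0 a l x hx hla]
      simp
  -- choose orthonormal pairs in E i and E j
  set bi := stdOrthonormalBasis ℝ (E i) with hbi
  set bj := stdOrthonormalBasis ℝ (E j) with hbj
  set x : T := (bi ⟨0, by omega⟩ : T) with hxdef
  set x' : T := (bi ⟨1, by omega⟩ : T) with hx'def
  set y : T := (bj ⟨0, by omega⟩ : T) with hydef
  set y' : T := (bj ⟨1, by omega⟩ : T) with hy'def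
  have hxm : x ∈ E i := SetLike.coe_mem _
  have hx'm : x' ∈ E i := SetLike.coe_mem _
  have hym : y ∈ E j := SetLike.coe_mem _
  have hy'm : y' ∈ E j := SetLike.coe_mem _
  have hbii := orthonormal_iff_ite.mp bi.orthonormal
  have hbjj := orthonormal_iff_ite.mp bj.orthonormal
  have hxx : ⟪x, x⟫ = 1 := by
    rw [hxdef, ← Submodule.coe_inner, hbii]
    simp
  have hx'x' : ⟪x', x'⟫ = 1 := by
    rw [hx'def, ← Submodule.coe_inner, hbii]
    simp
  have hxx' : ⟪x, x'⟫ = 0 := by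
    rw [hxdef, hx'def, ← Submodule.coe_inner, hbii]
    simp
  have hx'x : ⟪x', x⟫ = 0 := by rw [real_inner_comm]; exact hxx'
  have hyy : ⟪y, y⟫ = 1 := by
    rw [hydef, ← Submodule.coe_inner, hbjj]
    simp
  have hy'y' : ⟪y', y'⟫ = 1 := by
    rw [hy'def, ← Submodule.coe_inner, hbjj]
    simp
  have hyy' : ⟪y, y'⟫ = 0 := by
    rw [hydef, hy'def, ← Submodule.coe_inner, hbjj]
    simp
  have hy'y : ⟪y', y⟫ = 0 := by rw [real_inner_comm]; exact hyy'
  have hxy : ⟪x, y⟫ = 0 := horth i j hij x hxm y hym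
  have hyx : ⟪y, x⟫ = 0 := by rw [real_inner_comm]; exact hxy
  have hx'y' : ⟪x', y'⟫ = 0 := horth i j hij x' hx'm y' hy'm
  have hy'x' : ⟪y', x'⟫ = 0 := by rw [real_inner_comm]; exact hx'y'
  -- α values
  have haxx : α x x = η i := by rw [halpha i x x hxm hxm, hxx, one_smul]
  have hax'x' : α x' x' = η i := by rw [halpha i x' x' hx'm hx'm, hx'x', one_smul]
  have haxx' : α x x' = 0 := by rw [halpha i x x' hxm hx'm, hxx', zero_smul]
  have hax'x : α x' x = 0 := by rw [halpha i x' x hx'm hxm, hx'x, zero_smul]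
  have hayy : α y y = η j := by rw [halpha j y y hym hym, hyy, one_smul]
  have hay'y' : α y' y' = η j := by rw [halpha j y' y' hy'm hy'm, hy'y', one_smul]
  have hayy' : α y y' = 0 := by rw [halpha j y y' hym hy'm, hyy', zero_smul]
  have hay'y : α y' y = 0 := by rw [halpha j y' y hy'm hym, hy'y, zero_smul]
  have haxy : α x y = 0 := halpha0 i j x y hxm hym hij
  have hayx : α y x = 0 := halpha0 j i y x hym hxm (fun h => hij h.symm)
  have hax'y' : α x' y' = 0 := halpha0 i j x' y' hx'm hy'm hij
  have hay'x' : α y' x' = 0 := halpha0 j i y' x' hy'm hx'm (fun h => hij h.symm)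
  -- the four Weyl identities
  have eA := hW0 x x' x' x
  have eB := hW0 y y' y' y
  have eC := hW0 x y y x
  have eD := hW0 x' y' y' x'
  rw [hWeyl, hR] at eA eB eC eD
  rw [haxx, hax'x', haxx', hax'x, hxx, hx'x', hxx', hx'x] at eA
  rw [hayy, hay'y', hayy', hay'y, hyy, hy'y', hyy', hy'y] at eB
  rw [haxx, hayy, haxy, hayx, hxx, hyy, hxy, hyx] at eC
  rw [hax'x', hay'y', hax'y', hay'x', hx'x', hy'y', hx'y', hy'x'] at eD
  simp only [inner_zero_left, inner_zero_right, mul_one, mul_zero, one_mul,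
    zero_mul, sub_zero, add_zero, zero_add] at eA eB eC eD
  have hkey : ⟪η i - η j, η i - η j⟫ = (0 : ℝ) := by
    rw [inner_sub_left, inner_sub_right, inner_sub_right,
      real_inner_comm (η j) (η i)]
    linear_combination eA + eB - eC - eD + 2 * real_inner_comm (η j) (η i)
  have h0 : η i - η j = 0 := inner_self_eq_zero.mp hkey
  exact hij (hdist (sub_eq_zero.mp h0))
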